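/- Let p ≥ 3 be an integer and σ₁ = (1 − cos(2π/p))/sin(2π/p). Let D¹₁ = {(z,w) ∈ S³ : Im z = σ₁·Re z and Re z > 0}, where S³ = {(z,w) ∈ ℂ² : |z|² + |w|² = 1}. If (z,w) ∈ D¹₁ and m ∈ ℤ are such that (e^{2πim/p}·z, e^{2πim/p}·w) ∈ D¹₁, then p divides m. Consequently, the quotient map S³ → S³/(ℤ/p) is injective on D¹₁. -/

import Mathlib

/-- The stratum `D¹₁ = {(z, w) ∈ S³ ⊆ ℂ² | Im z = σ₁ Re z, Re z > 0}`,
where `σ₁ = (1 - cos(2π/p))/sin(2π/p)`. -/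
noncomputable def D11 (p : ℕ) : Set (ℂ × ℂ) :=
  {v | ‖v.1‖ ^ 2 + ‖v.2‖ ^ 2 = 1 ∧
    v.1.im = ((1 - Real.cos (2 * Real.pi / (p : ℝ))) /
      Real.sin (2 * Real.pi / (p : ℝ))) * v.1.re ∧
    0 < v.1.re}

/-- Let `p ≥ 3`. If `(z, w) ∈ D¹₁` and `m ∈ ℤ` are such that
`(e^{2πim/p} z, e^{2πim/p} w) ∈ D¹₁`, then `p ∣ m`. Consequently the quotient map
`S³ → S³/(ℤ/p)` is injective on `D¹₁`: two points of `D¹₁` in the same `ℤ/p`-orbit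
are equal. -/
theorem stmt13 (p : ℕ) (hp : 3 ≤ p) :
    (∀ z w : ℂ, (z, w) ∈ D11 p → ∀ m : ℤ,
      (Complex.exp (2 * Real.pi * Complex.I * (m : ℂ) / (p : ℂ)) * z,
        Complex.exp (2 * Real.pi * Complex.I * (m : ℂ) / (p : ℂ)) * w) ∈ D11 p →
      (p : ℤ) ∣ m) ∧
    ∀ v ∈ D11 p, ∀ v' ∈ D11 p,
      (∃ m : ℤ, (Complex.exp (2 * Real.pi * Complex.I * (m : ℂ) / (p : ℂ)) * v.1,
        Complex.exp (2 * Real.pi * Complex.I * (m : ℂ) / (p : ℂ)) * v.2) = v') →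
      v = v' := by
  have hpR : (p : ℝ) ≠ 0 := by
    have : 0 < p := by omega
    positivity
  have hpC : (p : ℂ) ≠ 0 := by exact_mod_cast hpR
  have key : ∀ z w : ℂ, (z, w) ∈ D11 p → ∀ m : ℤ,
      (Complex.exp (2 * Real.pi * Complex.I * (m : ℂ) / (p : ℂ)) * z,
        Complex.exp (2 * Real.pi * Complex.I * (m : ℂ) / (p : ℂ)) * w) ∈ D11 p →
      (p : ℤ) ∣ m := by
    intro z w hz m hm
    set σ := (1 - Real.cos (2 * Real.pi / (p : ℝ))) / Real.sin (2 * Real.pi / (p : ℝ)) with hσ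
    obtain ⟨-, hz1, hz2⟩ := hz
    obtain ⟨-, hw1, hw2⟩ := hm
    set u := Complex.exp (2 * Real.pi * Complex.I * (m : ℂ) / (p : ℂ)) with hu
    simp only [Complex.mul_im, Complex.mul_re] at hw1 hw2
    simp only [← hσ] at hz1 hw1
    have hz1' : z.im = σ * z.re := hz1
    -- u.im = 0
    have hkey : u.im * (z.re * (1 + σ ^ 2)) = 0 := by
      linear_combination hw1 - u.re * hz1' - σ * u.im * hz1'
    have hpos : 0 < z.re * (1 + σ ^ 2) := by positivity
    have him : u.im = 0 := by
      rcases mul_eq_zero.mp hkey with h | h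
      · exact h
      · exact absurd h (ne_of_gt hpos)
    rw [him] at hw2
    simp only [zero_mul, sub_zero] at hw2
    have hre : 0 < u.re := by
      rcases mul_pos_iff.mp hw2 with h | h
      · exact h.1
      · exact absurd h.2 (not_lt.mpr hz2.le)
    -- the exponent is purely imaginary
    have hexp : (2 * Real.pi * Complex.I * (m : ℂ) / (p : ℂ)) =
        ((2 * Real.pi * (m : ℝ) / (p : ℝ) : ℝ) : ℂ) * Complex.I := by
      push_cast
      field_simp
    have habs : ‖u‖ = 1 := by
      rw [hu, hexp, Complex.norm_exp_ofReal_mul_I]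
    have hure : u.re = 1 := by
      have : ‖u‖ = |u.re| := by
        rw [Complex.norm_def, Complex.normSq_apply, him]
        rw [show u.re * u.re + 0 * 0 = u.re ^ 2 by ring, Real.sqrt_sq_eq_abs]
      rw [this, abs_of_pos hre] at habs
      exact habs
    have hu1 : u = 1 := by
      apply Complex.ext <;> simp [hure, him]
    rw [hu, Complex.exp_eq_one_iff] at hu1
    obtain ⟨n, hn⟩ := hu1
    have hn' : (m : ℂ) = n * p := by
      field_simp at hn
      have h2 : (2 : ℂ) * Real.pi * Complex.I ≠ 0 := by
        simp [Complex.I_ne_zero, Real.pi_ne_zero]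
      -- rearrange hn
      have : (2 : ℂ) * Real.pi * Complex.I * m = (2 : ℂ) * Real.pi * Complex.I * (n * p) := by
        linear_combination (2 * Real.pi * Complex.I) * hn
      exact mul_left_cancel₀ h2 this
    have : m = n * p := by exact_mod_cast hn'
    exact ⟨n, by rw [this]; ring⟩
  refine ⟨key, ?_⟩
  rintro v hv v' hv' ⟨m, heq⟩
  have hdvd : (p : ℤ) ∣ m := by
    apply key v.1 v.2 hv m
    rw [heq]
    exact hv'
  obtain ⟨k, hk⟩ := hdvd
  have hone : Complex.exp (2 * Real.pi * Complex.I * (m : ℂ) / (p : ℂ)) = 1 := by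
    have : (2 * Real.pi * Complex.I * (m : ℂ) / (p : ℂ)) = (k : ℂ) * (2 * Real.pi * Complex.I) := by
      rw [hk]; push_cast; field_simp
    rw [this, Complex.exp_int_mul_two_pi_mul_I]
  rw [hone] at heq
  simp only [one_mul] at heq
  exact Prod.ext (by rw [← heq]) (by rw [← heq])
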